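/- arXiv:physics/9908064 — 2 statements merged into one kernel-verified Lean document; each statement's English description precedes it below -/
import Mathlib

section
/- Let Ω ⊂ ℝ³ be bounded and star-shaped about the origin, containing the closed ball of radius R_min about the origin, and contained in the ball of radius R_max. Let v : Ω → ℝ be C¹ with |v| ≤ c on the ball of radius R_min. Then ‖v‖_{L²(Ω)} ≤ [ (R_max - R_min)(R_max³ - R_min³) / (3 R_max R_min) ]^{1/2} ‖∇v‖_{L²(Ω)} + ‖c‖_{L²(Ω)}, where ‖c‖_{L²(Ω)} = c·|Ω|^{1/2}. -/
open MeasureTheory Set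
open scoped ENNReal NNReal

-- L0: a.e. restrict from everywhere on the (possibly non-measurable) set
lemma ae_restrict_of_forall_mem' {α : Type*} [MeasurableSpace α] (μ : Measure α)
    {s : Set α} {p : α → Prop} (hp : MeasurableSet {x | p x}) (h : ∀ x ∈ s, p x) :
    ∀ᵐ x ∂μ.restrict s, p x := by
  rw [ae_iff]
  have : {x | ¬ p x} = {x | p x}ᶜ := rfl
  rw [this, Measure.restrict_apply hp.compl]
  have : {x | p x}ᶜ ∩ s = ∅ := by
    ext x; simp only [mem_inter_iff, mem_compl_iff, mem_setOf_eq, mem_empty_iff_false, iff_false,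
      not_and]
    exact fun hpx hxs => hpx (h x hxs)
  simp [this]

noncomputable section
abbrev E3 := EuclideanSpace ℝ (Fin 3)

-- L1 : polar coordinates for lintegral on E3
lemma polar_lintegral (f : E3 → ℝ≥0∞) (hf : Measurable f) :
    ∫⁻ x, f x ∂(volume : Measure E3) =
      ∫⁻ p : Metric.sphere (0:E3) 1 × Set.Ioi (0:ℝ), f (p.2.1 • (p.1 : E3))
        ∂((volume : Measure E3).toSphere.prod (Measure.volumeIoiPow 2)) := by
  have hdim : Module.finrank ℝ E3 = 3 := by
    simpa using finrank_euclideanSpace_fin (𝕜 := ℝ) (n := 3)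
  have hmp := (volume : Measure E3).measurePreserving_homeomorphUnitSphereProd
  rw [hdim] at hmp
  have hg : Measurable fun p : Metric.sphere (0:E3) 1 × Set.Ioi (0:ℝ) => f (p.2.1 • (p.1 : E3)) := by
    apply hf.comp
    exact ((continuous_subtype_val.comp continuous_snd).smul
      (continuous_subtype_val.comp continuous_fst)).measurable
  rw [← hmp.lintegral_comp hg]
  refine Eq.symm ?_
  have key : ∀ y : ({(0:E3)}ᶜ : Set E3),
      f ((((homeomorphUnitSphereProd E3) y).2 : ℝ) • (((homeomorphUnitSphereProd E3) y).1 : E3))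
        = f y := by
    intro y
    have hy : (y : E3) ≠ 0 := y.2
    simp only [homeomorphUnitSphereProd]
    congr 1
    exact congrArg Subtype.val ((homeomorphSphereProd E3 1 one_pos).symm_apply_apply y)
  calc ∫⁻ y : ({(0:E3)}ᶜ : Set E3),
        f ((((homeomorphUnitSphereProd E3) y).2 : ℝ) • (((homeomorphUnitSphereProd E3) y).1 : E3))
        ∂((volume : Measure E3).comap Subtype.val)
      = ∫⁻ y : ({(0:E3)}ᶜ : Set E3), f y ∂((volume : Measure E3).comap Subtype.val) := by
        exact lintegral_congr key
    _ = ∫⁻ x in ({(0:E3)}ᶜ : Set E3), f x ∂(volume : Measure E3) :=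
        lintegral_subtype_comap (measurableSet_singleton _).compl f
    _ = ∫⁻ x, f x ∂(volume : Measure E3) := by
        rw [MeasureTheory.restrict_compl_singleton]

-- L2 : lintegral over volumeIoiPow 2
lemma lintegral_volumeIoiPow2 (φ : ℝ → ℝ≥0∞) (hφ : Measurable φ) :
    ∫⁻ r : Set.Ioi (0:ℝ), φ r.1 ∂(Measure.volumeIoiPow 2)
      = ∫⁻ r in Set.Ioi (0:ℝ), ENNReal.ofReal (r^2) * φ r := by
  rw [Measure.volumeIoiPow]
  have h1 := lintegral_withDensity_eq_lintegral_mul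
    (Measure.comap (Subtype.val : Set.Ioi (0:ℝ) → ℝ) volume)
    (f := fun x : Set.Ioi (0:ℝ) => ENNReal.ofReal (x.1 ^ 2))
    ((measurable_subtype_coe.pow_const 2).ennreal_ofReal)
    (g := φ ∘ Subtype.val) (hφ.comp measurable_subtype_coe)
  have h2 := lintegral_subtype_comap (μ := (volume : Measure ℝ))
    (measurableSet_Ioi (a := (0:ℝ))) (fun r => ENNReal.ofReal (r ^ 2) * φ r)
  calc ∫⁻ r : Set.Ioi (0:ℝ), φ r.1
        ∂((Measure.comap Subtype.val volume).withDensity fun r => ENNReal.ofReal (r.1 ^ 2))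
      = ∫⁻ r : Set.Ioi (0:ℝ), ENNReal.ofReal (r.1 ^ 2) * φ r.1
          ∂(Measure.comap Subtype.val volume) := h1
    _ = ∫⁻ r in Set.Ioi (0:ℝ), ENNReal.ofReal (r ^ 2) * φ r := h2


lemma ray_bound (Rmin Rmax c : ℝ) (hRmin : 0 < Rmin) (hRR : Rmin ≤ Rmax)
    (v : E3 → ℝ) (hv : ContDiff ℝ 1 v)
    (hc : ∀ x ∈ Metric.closedBall (0 : E3) Rmin, |v x| ≤ c)
    (x : E3) (hx1 : Rmin ≤ ‖x‖) (hx2 : ‖x‖ ≤ Rmax) :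
    |v x| ≤ c + Real.sqrt ((Rmax - Rmin)/(Rmax*Rmin)) *
      Real.sqrt (∫ s in Rmin..‖x‖, s^2 * ‖fderiv ℝ v (s • (‖x‖⁻¹ • x))‖^2) := by
  set R := ‖x‖ with hR
  have hR0 : 0 < R := lt_of_lt_of_le hRmin hx1
  set ω : E3 := ‖x‖⁻¹ • x with hω
  have hωnorm : ‖ω‖ = 1 := by
    rw [hω, norm_smul, norm_inv, norm_norm, inv_mul_cancel₀ hR0.ne']
  have hRω : R • ω = x := by
    rw [hω, smul_smul, mul_inv_cancel₀ hR0.ne', one_smul]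
  set h : ℝ → ℝ := fun s => ‖fderiv ℝ v (s • ω)‖ with hh
  have hcont_fderiv : Continuous (fderiv ℝ v) := hv.continuous_fderiv one_ne_zero
  have hconth : Continuous h :=
    (hcont_fderiv.comp (continuous_id.smul continuous_const)).norm
  have hderiv : ∀ s : ℝ, HasDerivAt (fun s => v (s • ω)) ((fderiv ℝ v (s • ω)) ω) s := by
    intro s
    have h1 : HasDerivAt (fun s : ℝ => s • ω) ω s := by
      simpa using (hasDerivAt_id s).smul_const ω
    exact ((hv.differentiable one_ne_zero).differentiableAt.hasFDerivAt.comp_hasDerivAt s h1)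
  have hcont_d : Continuous fun s : ℝ => (fderiv ℝ v (s • ω)) ω :=
    (hcont_fderiv.comp (continuous_id.smul continuous_const)).clm_apply continuous_const
  have hftc : v x - v (Rmin • ω) = ∫ s in Rmin..R, (fderiv ℝ v (s • ω)) ω := by
    conv_lhs => rw [← hRω]
    exact (intervalIntegral.integral_eq_sub_of_hasDerivAt (fun s _ => hderiv s)
      (hcont_d.intervalIntegrable _ _)).symm
  have hvmin : |v (Rmin • ω)| ≤ c := by
    apply hc
    rw [Metric.mem_closedBall, dist_zero_right, norm_smul, hωnorm, mul_one,
      Real.norm_eq_abs, abs_of_pos hRmin]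
  have step1 : |v x| ≤ c + ∫ s in Rmin..R, h s := by
    have h0 : |v x| ≤ |v (Rmin • ω)| + |v x - v (Rmin • ω)| := by
      have := abs_add_le (v (Rmin • ω)) (v x - v (Rmin • ω))
      simpa using this
    refine h0.trans (add_le_add hvmin ?_)
    rw [hftc]
    calc |∫ s in Rmin..R, (fderiv ℝ v (s • ω)) ω|
        ≤ ∫ s in Rmin..R, ‖(fderiv ℝ v (s • ω)) ω‖ := by
          simpa [Real.norm_eq_abs] using
            intervalIntegral.norm_integral_le_integral_norm
              (f := fun s => (fderiv ℝ v (s • ω)) ω) (a := Rmin) (b := R) (μ := volume) hx1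
      _ ≤ ∫ s in Rmin..R, h s := by
          apply intervalIntegral.integral_mono_on hx1
            (hcont_d.norm.intervalIntegrable _ _) (hconth.intervalIntegrable _ _)
          intro s _
          calc ‖(fderiv ℝ v (s • ω)) ω‖ ≤ ‖fderiv ℝ v (s • ω)‖ * ‖ω‖ :=
              (fderiv ℝ v (s • ω)).le_opNorm ω
            _ = h s := by rw [hωnorm, mul_one]
  -- Cauchy-Schwarz
  set J : ℝ := ∫ s in Rmin..R, s^2 * (h s)^2 with hJ
  have hJ0 : 0 ≤ J := by
    rw [hJ]
    apply intervalIntegral.integral_nonneg hx1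
    intro s _; positivity
  have hCS : (∫ s in Rmin..R, h s) ≤ Real.sqrt ((Rmax - Rmin)/(Rmax*Rmin)) * Real.sqrt J := by
    set ν : Measure ℝ := volume.restrict (Set.Ioc Rmin R) with hν
    haveI : IsFiniteMeasure ν := by
      constructor
      rw [hν, Measure.restrict_apply_univ]
      simp [Real.volume_Ioc]
    have hmem : ∀ s ∈ Set.Ioc Rmin R, (0:ℝ) < s := fun s hs => hRmin.trans hs.1
    have haemem : ∀ᵐ s ∂ν, s ∈ Set.Ioc Rmin R := ae_restrict_mem measurableSet_Ioc
    -- bound for h on the interval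
    obtain ⟨M, hM⟩ : ∃ M, ∀ s ∈ Set.Icc Rmin R, ‖s * h s‖ ≤ M := by
      have hcp : IsCompact (Set.Icc Rmin R) := isCompact_Icc
      obtain ⟨M, hM⟩ := hcp.exists_bound_of_continuousOn
        ((continuous_id.mul hconth).continuousOn)
      exact ⟨M, hM⟩
    have hf2 : MemLp (fun s : ℝ => s⁻¹) (ENNReal.ofReal 2) ν := by
      apply MemLp.of_bound (measurable_inv.aestronglyMeasurable) Rmin⁻¹
      filter_upwards [haemem] with s hs
      rw [Real.norm_eq_abs, abs_of_pos (inv_pos.2 (hmem s hs))]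
      exact inv_anti₀ hRmin hs.1.le
    have hg2 : MemLp (fun s : ℝ => s * h s) (ENNReal.ofReal 2) ν := by
      apply MemLp.of_bound ((continuous_id.mul hconth).aestronglyMeasurable) M
      filter_upwards [haemem] with s hs
      exact hM s ⟨hs.1.le, hs.2⟩
    have hconj : Real.HolderConjugate 2 2 := by
      constructor <;> norm_num
    have hHolder := integral_mul_le_Lp_mul_Lq_of_nonneg (μ := ν) hconj
      (f := fun s : ℝ => s⁻¹) (g := fun s : ℝ => s * h s)
      (by filter_upwards [haemem] with s hs; exact (inv_pos.2 (hmem s hs)).le)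
      (by filter_upwards [haemem] with s hs
          exact mul_nonneg (hmem s hs).le (norm_nonneg _)) hf2 hg2
    have heq1 : ∫ s, s⁻¹ * (s * h s) ∂ν = ∫ s in Rmin..R, h s := by
      rw [intervalIntegral.integral_of_le hx1]
      apply integral_congr_ae
      filter_upwards [haemem] with s hs
      rw [inv_mul_cancel_left₀ (hmem s hs).ne']
    have heq2 : ∫ s, (s⁻¹) ^ (2:ℝ) ∂ν ≤ (Rmax - Rmin)/(Rmax*Rmin) := by
      have : ∫ s, (s⁻¹) ^ (2:ℝ) ∂ν = ∫ s in Rmin..R, s ^ (-2 : ℤ) := by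
        rw [intervalIntegral.integral_of_le hx1]
        apply integral_congr_ae
        filter_upwards [haemem] with s hs
        rw [show (2:ℝ) = ((2:ℕ):ℝ) by norm_num, Real.rpow_natCast, inv_pow, zpow_neg]
        norm_cast
      rw [this, integral_zpow]
      · norm_num
        have heq : (R⁻¹ - Rmin⁻¹) / (-1:ℝ) = Rmin⁻¹ - R⁻¹ := by ring
        rw [heq]
        have h2 : Rmax⁻¹ ≤ R⁻¹ := inv_anti₀ hR0 hx2
        have h3 : (Rmax - Rmin)/(Rmax*Rmin) = Rmin⁻¹ - Rmax⁻¹ := by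
          have h4 : Rmax ≠ 0 := (hRmin.trans_le hRR).ne'
          rw [inv_sub_inv hRmin.ne' h4, mul_comm]
        rw [h3]
        linarith
      · right
        refine ⟨by norm_num, fun h0 => ?_⟩
        rcases Set.mem_uIcc.mp h0 with ⟨h1', h2'⟩ | ⟨h1', h2'⟩ <;> linarith
    have heq3 : ∫ s, (s * h s) ^ (2:ℝ) ∂ν = J := by
      rw [hJ, intervalIntegral.integral_of_le hx1]
      apply integral_congr_ae
      filter_upwards [haemem] with s hs
      rw [show (2:ℝ) = ((2:ℕ):ℝ) by norm_num, Real.rpow_natCast]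
      ring
    calc (∫ s in Rmin..R, h s) = ∫ s, s⁻¹ * (s * h s) ∂ν := heq1.symm
      _ ≤ (∫ s, (s⁻¹) ^ (2:ℝ) ∂ν) ^ (1/(2:ℝ)) * (∫ s, (s * h s) ^ (2:ℝ) ∂ν) ^ (1/(2:ℝ)) := hHolder
      _ ≤ Real.sqrt ((Rmax - Rmin)/(Rmax*Rmin)) * Real.sqrt J := by
          have e2 : (∫ s, (s * h s) ^ (2:ℝ) ∂ν) ^ (1/(2:ℝ)) = Real.sqrt J := by
            rw [heq3, ← Real.sqrt_eq_rpow]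
          have e1 : (∫ s, (s⁻¹) ^ (2:ℝ) ∂ν) ^ (1/(2:ℝ))
              ≤ Real.sqrt ((Rmax - Rmin)/(Rmax*Rmin)) := by
            rw [← Real.sqrt_eq_rpow]
            exact Real.sqrt_le_sqrt heq2
          rw [e2]
          exact mul_le_mul_of_nonneg_right e1 (Real.sqrt_nonneg _)
  exact step1.trans (by linarith)


theorem new_poincare_inequality (Ω : Set (EuclideanSpace ℝ (Fin 3)))
    (Rmin Rmax c : ℝ) (hRmin : 0 < Rmin) (hRR : Rmin ≤ Rmax)
    (hstar : StarConvex ℝ 0 Ω) (hbdd : Ω ⊆ Metric.closedBall 0 Rmax)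
    (hball : Metric.closedBall 0 Rmin ⊆ Ω)
    (v : EuclideanSpace ℝ (Fin 3) → ℝ) (hv : ContDiff ℝ 1 v)
    (hc : ∀ x ∈ Metric.closedBall (0 : EuclideanSpace ℝ (Fin 3)) Rmin, |v x| ≤ c) :
    Real.sqrt (∫ x in Ω, (v x) ^ 2)
      ≤ Real.sqrt ((Rmax - Rmin) * (Rmax ^ 3 - Rmin ^ 3) / (3 * Rmax * Rmin))
          * Real.sqrt (∫ x in Ω, ‖fderiv ℝ v x‖ ^ 2)
        + Real.sqrt (∫ x in Ω, c ^ 2) := by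
  have hRmax : 0 < Rmax := hRmin.trans_le hRR
  have hc0 : 0 ≤ c := (abs_nonneg _).trans (hc 0 (by simp [hRmin.le]))
  set μ : Measure E3 := volume with hμ
  -- measurable hull
  set T : Set E3 := toMeasurable μ Ω with hT
  set Ω' : Set E3 := T ∩ Metric.closedBall (0:E3) Rmax with hΩ'def
  have hTmeas : MeasurableSet T := measurableSet_toMeasurable μ Ω
  have hΩ'meas : MeasurableSet Ω' := hTmeas.inter Metric.isClosed_closedBall.measurableSet
  have hΩsub : Ω ⊆ Ω' := subset_inter (subset_toMeasurable μ Ω) hbdd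
  have hμΩ : μ Ω ≠ ⊤ := ((measure_mono hbdd).trans_lt measure_closedBall_lt_top).ne
  have hrestrict : μ.restrict Ω' = μ.restrict Ω := by
    have h1 : μ (T \ Metric.closedBall (0:E3) Rmax) = 0 := by
      have h2 := measure_inter_add_diff (μ := μ) T
        (Metric.isClosed_closedBall (x := (0:E3)) (ε := Rmax)).measurableSet
      have h3 : μ T = μ Ω := measure_toMeasurable Ω
      have h4 : μ Ω ≤ μ Ω' := measure_mono hΩsub
      have h5 : μ Ω' ≠ ⊤ := by
        refine ((measure_mono (inter_subset_right)).trans_lt measure_closedBall_lt_top).ne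
      have h6 : μ Ω' + μ (T \ Metric.closedBall (0:E3) Rmax) ≤ μ Ω' + 0 := by
        rw [add_zero, h2, h3]
        exact h4
      rw [ENNReal.add_le_add_iff_left h5] at h6
      exact le_zero_iff.mp h6
    have h7 : Ω' =ᵐ[μ] T := by
      rw [ae_eq_set]
      constructor
      · have h0 : Ω' \ T = ∅ := Set.diff_eq_empty.mpr inter_subset_left
        rw [h0]; exact measure_empty
      · simpa [hΩ'def, diff_self_inter] using h1
    calc μ.restrict Ω' = μ.restrict T := Measure.restrict_congr_set h7
      _ = μ.restrict Ω := Measure.restrict_toMeasurable hμΩ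
  -- key functions
  set K : ℝ := Real.sqrt ((Rmax - Rmin)/(Rmax*Rmin)) with hK
  have hk0 : (0:ℝ) ≤ (Rmax - Rmin)/(Rmax*Rmin) :=
    div_nonneg (by linarith) (by positivity)
  set C3 : ℝ := (Rmax^3 - Rmin^3)/3 with hC3def
  have hC30 : 0 ≤ C3 := by
    have := pow_le_pow_left₀ hRmin.le hRR 3
    rw [hC3def]; linarith
  set Dv : E3 → ℝ := fun y => ‖fderiv ℝ v y‖ with hDv
  have hDvcont : Continuous Dv := (hv.continuous_fderiv one_ne_zero).norm
  set A : Set E3 := {y : E3 | Rmin ≤ ‖y‖} with hA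
  have hAmeas : MeasurableSet A := (isClosed_le continuous_const continuous_norm).measurableSet
  set S : Set E3 := Ω' ∩ A with hSdef
  have hSmeas : MeasurableSet S := hΩ'meas.inter hAmeas
  set W : E3 → ℝ≥0∞ := S.indicator (fun y => ENNReal.ofReal (Dv y ^ 2)) with hW
  have hWmeas : Measurable W :=
    ((hDvcont.pow 2).measurable.ennreal_ofReal).indicator hSmeas
  set P : E3 → ℝ≥0∞ :=
    fun x => ∫⁻ r in Set.Ioi (0:ℝ), ENNReal.ofReal (r^2) * W (r • (‖x‖⁻¹ • x)) with hP
  have hsmul_meas : Measurable fun q : E3 × ℝ => W (q.2 • (‖q.1‖⁻¹ • q.1)) := by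
    apply hWmeas.comp
    exact measurable_snd.smul ((measurable_norm.comp measurable_fst).inv.smul measurable_fst)
  have hPmeas : Measurable P := by
    apply Measurable.lintegral_prod_right (f := fun (x : E3) (r : ℝ) =>
      ENNReal.ofReal (r^2) * W (r • (‖x‖⁻¹ • x)))
    apply Measurable.mul
    · exact ((measurable_snd.pow_const 2).ennreal_ofReal)
    · exact hsmul_meas
  have hPray : ∀ (ω : Metric.sphere (0:E3) 1) (r : ℝ), 0 < r →
      P (r • (ω:E3)) = P (ω:E3) := by
    intro ω r hr
    have hnorm : ‖(ω:E3)‖ = 1 := mem_sphere_zero_iff_norm.1 ω.2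
    have hdir : ‖r • (ω:E3)‖⁻¹ • (r • (ω:E3)) = ‖(ω:E3)‖⁻¹ • (ω:E3) := by
      rw [norm_smul, hnorm, mul_one, Real.norm_eq_abs, abs_of_pos hr, inv_one, one_smul,
        smul_smul, inv_mul_cancel₀ hr.ne', one_smul]
    simp only [hP, hdir]
  have hPsphere : ∀ (ω : Metric.sphere (0:E3) 1),
      P (ω:E3) = ∫⁻ r in Set.Ioi (0:ℝ), ENNReal.ofReal (r^2) * W (r • (ω:E3)) := by
    intro ω
    have hnorm : ‖(ω:E3)‖ = 1 := mem_sphere_zero_iff_norm.1 ω.2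
    simp only [hP, hnorm, inv_one, one_smul]
  set G : E3 → ℝ≥0∞ :=
    A.indicator (fun x => ENNReal.ofReal K * P x ^ ((2:ℝ)⁻¹)) with hG
  have hGmeas : Measurable G :=
    (measurable_const.mul (hPmeas.pow_const _)).indicator hAmeas
  -- Step 1 : pointwise a.e. bound
  have hae : ∀ᵐ x ∂μ.restrict Ω, ENNReal.ofReal |v x| ≤ ENNReal.ofReal c + G x := by
    apply ae_restrict_of_forall_mem' μ
    · exact measurableSet_le (hv.continuous.abs.measurable.ennreal_ofReal)
        (measurable_const.add hGmeas)
    · intro x hxΩ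
      by_cases hxA : Rmin ≤ ‖x‖
      · have hxmax : ‖x‖ ≤ Rmax := by
          have := hbdd hxΩ
          rwa [Metric.mem_closedBall, dist_zero_right] at this
        have hray := ray_bound Rmin Rmax c hRmin hRR v hv hc x hxA hxmax
        have hxR : (0:ℝ) < ‖x‖ := hRmin.trans_le hxA
        set ω' : E3 := ‖x‖⁻¹ • x with hω'
        have hωnorm : ‖ω'‖ = 1 := by
          rw [hω', norm_smul, norm_inv, norm_norm, inv_mul_cancel₀ hxR.ne']
        set J : ℝ := ∫ s in Rmin..‖x‖, s^2 * ‖fderiv ℝ v (s • ω')‖^2 with hJdef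
        have hJ0 : 0 ≤ J := by
          rw [hJdef]
          apply intervalIntegral.integral_nonneg hxA
          intro s _; positivity
        have hJP : ENNReal.ofReal J ≤ P x := by
          have hcont2 : Continuous fun s : ℝ => s^2 * Dv (s • ω')^2 :=
            (continuous_pow 2).mul
              ((hDvcont.comp (continuous_id.smul continuous_const)).pow 2)
          have hint : IntegrableOn (fun s : ℝ => s^2 * Dv (s • ω')^2)
              (Set.Ioc Rmin ‖x‖) volume := (hcont2.intervalIntegrable Rmin ‖x‖).1
          have h1 : ENNReal.ofReal J
              = ∫⁻ s in Set.Ioc Rmin ‖x‖, ENNReal.ofReal (s^2 * Dv (s • ω')^2) := by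
            rw [hJdef, intervalIntegral.integral_of_le hxA,
              ofReal_integral_eq_lintegral_ofReal hint
                (Filter.Eventually.of_forall fun s => by positivity)]
          rw [h1]
          have hcong : ∀ s ∈ Set.Ioc Rmin ‖x‖,
              ENNReal.ofReal (s^2 * Dv (s • ω')^2) = ENNReal.ofReal (s^2) * W (s • ω') := by
            intro s hs
            have hs0 : 0 < s := hRmin.trans hs.1
            have hnorm : ‖s • ω'‖ = s := by
              rw [norm_smul, hωnorm, mul_one, Real.norm_eq_abs, abs_of_pos hs0]
            have hmemS : s • ω' ∈ S := by
              constructor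
              · apply hΩsub
                have heq : s • ω' = (s * ‖x‖⁻¹) • x := by rw [hω', smul_smul]
                rw [heq]
                apply hstar.smul_mem hxΩ
                · positivity
                · rw [← div_eq_mul_inv, div_le_one hxR]
                  exact hs.2
              · rw [hA, mem_setOf_eq, hnorm]; exact hs.1.le
            rw [hW, indicator_of_mem hmemS, ← ENNReal.ofReal_mul (sq_nonneg s)]
          calc ∫⁻ s in Set.Ioc Rmin ‖x‖, ENNReal.ofReal (s^2 * Dv (s • ω')^2)
              = ∫⁻ s in Set.Ioc Rmin ‖x‖, ENNReal.ofReal (s^2) * W (s • ω') :=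
                setLIntegral_congr_fun measurableSet_Ioc hcong
            _ ≤ ∫⁻ s in Set.Ioi (0:ℝ), ENNReal.ofReal (s^2) * W (s • ω') :=
                lintegral_mono_set (fun s hs => hRmin.trans hs.1)
            _ = P x := rfl
        have hGx : G x = ENNReal.ofReal K * P x ^ ((2:ℝ)⁻¹) := by
          rw [hG, indicator_of_mem (show x ∈ A from hxA)]
        calc ENNReal.ofReal |v x| ≤ ENNReal.ofReal (c + K * Real.sqrt J) :=
            ENNReal.ofReal_le_ofReal hray
          _ = ENNReal.ofReal c + ENNReal.ofReal (K * Real.sqrt J) :=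
            ENNReal.ofReal_add hc0 (by positivity)
          _ = ENNReal.ofReal c + ENNReal.ofReal K * ENNReal.ofReal (Real.sqrt J) := by
            rw [ENNReal.ofReal_mul (Real.sqrt_nonneg _)]
          _ ≤ ENNReal.ofReal c + ENNReal.ofReal K * P x ^ ((2:ℝ)⁻¹) := by
            gcongr
            rw [Real.sqrt_eq_rpow, ← ENNReal.ofReal_rpow_of_nonneg hJ0 (by norm_num)]
            rw [show (1/2 : ℝ) = (2:ℝ)⁻¹ by norm_num]
            exact ENNReal.rpow_le_rpow hJP (by norm_num)
          _ = ENNReal.ofReal c + G x := by rw [hGx]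
      · have hxball : x ∈ Metric.closedBall (0:E3) Rmin := by
          rw [Metric.mem_closedBall, dist_zero_right]
          linarith [not_le.mp hxA]
        exact (ENNReal.ofReal_le_ofReal (hc x hxball)).trans le_self_add
  -- integrals
  set Iv : ℝ≥0∞ := ∫⁻ x in Ω, ENNReal.ofReal ((v x)^2) ∂μ with hIvdef
  set ID : ℝ≥0∞ := ∫⁻ x in Ω, ENNReal.ofReal (Dv x^2) ∂μ with hIDdef
  set Ic : ℝ≥0∞ := ∫⁻ x in Ω, ENNReal.ofReal (c^2) ∂μ with hIcdef
  set IG : ℝ≥0∞ := ∫⁻ x in Ω, G x ^ (2:ℝ) ∂μ with hIGdef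
  -- Step 2 : Minkowski
  have hmink : Iv ^ (1/(2:ℝ)) ≤ Ic ^ (1/(2:ℝ)) + IG ^ (1/(2:ℝ)) := by
    have h1 : Iv = ∫⁻ x in Ω, (ENNReal.ofReal |v x|) ^ (2:ℝ) ∂μ := by
      rw [hIvdef]
      apply lintegral_congr
      intro x
      rw [ENNReal.ofReal_rpow_of_nonneg (abs_nonneg _) (by norm_num)]
      rw [show ((2:ℝ)) = ((2:ℕ):ℝ) by norm_num, Real.rpow_natCast, sq_abs]
    have h2 : ∫⁻ x in Ω, (ENNReal.ofReal |v x|) ^ (2:ℝ) ∂μ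
        ≤ ∫⁻ x in Ω, ((fun _ : E3 => ENNReal.ofReal c) + G) x ^ (2:ℝ) ∂μ := by
      apply lintegral_mono_ae
      filter_upwards [hae] with x hx
      exact ENNReal.rpow_le_rpow hx (by norm_num)
    have h3 := ENNReal.lintegral_Lp_add_le (μ := μ.restrict Ω)
      (f := fun _ => ENNReal.ofReal c) (g := G) aemeasurable_const hGmeas.aemeasurable
      (one_le_two)
    have h4 : ∫⁻ x in Ω, (fun _ : E3 => ENNReal.ofReal c) x ^ (2:ℝ) ∂μ = Ic := by
      rw [hIcdef]
      apply lintegral_congr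
      intro x
      rw [ENNReal.ofReal_rpow_of_nonneg hc0 (by norm_num)]
      rw [show ((2:ℝ)) = ((2:ℕ):ℝ) by norm_num, Real.rpow_natCast]
    calc Iv ^ (1/(2:ℝ))
        ≤ (∫⁻ x in Ω, ((fun _ : E3 => ENNReal.ofReal c) + G) x ^ (2:ℝ) ∂μ) ^ (1/(2:ℝ)) :=
          ENNReal.rpow_le_rpow (h1 ▸ h2) (by norm_num)
      _ ≤ (∫⁻ x in Ω, (fun _ : E3 => ENNReal.ofReal c) x ^ (2:ℝ) ∂μ) ^ (1/(2:ℝ))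
            + (∫⁻ x in Ω, G x ^ (2:ℝ) ∂μ) ^ (1/(2:ℝ)) := h3
      _ = Ic ^ (1/(2:ℝ)) + IG ^ (1/(2:ℝ)) := by rw [h4]
  -- measurability helper on the sphere-product
  have hcomp : ∀ {f : E3 → ℝ≥0∞}, Measurable f →
      Measurable fun p : Metric.sphere (0:E3) 1 × Set.Ioi (0:ℝ) => f (p.2.1 • (p.1 : E3)) :=
    fun hf => hf.comp (((continuous_subtype_val.comp continuous_snd).smul
      (continuous_subtype_val.comp continuous_fst)).measurable)
  -- Step 3a : W integral dominated by ID
  have hWint : ∫⁻ x, W x ∂μ ≤ ID := by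
    have h1 : ∫⁻ x, W x ∂μ = ∫⁻ x in S, ENNReal.ofReal (Dv x^2) ∂μ := by
      rw [hW]
      exact lintegral_indicator hSmeas _
    rw [h1, hIDdef]
    calc ∫⁻ x in S, ENNReal.ofReal (Dv x^2) ∂μ
        ≤ ∫⁻ x in Ω', ENNReal.ofReal (Dv x^2) ∂μ := lintegral_mono_set inter_subset_left
      _ = ∫⁻ x in Ω, ENNReal.ofReal (Dv x^2) ∂μ := by rw [hrestrict]
  -- Step 3b : sphere integral of P equals W integral
  have hQint : ∫⁻ ω : Metric.sphere (0:E3) 1, P (ω:E3) ∂μ.toSphere = ∫⁻ x, W x ∂μ := by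
    rw [polar_lintegral W hWmeas, lintegral_prod _ (hcomp hWmeas).aemeasurable]
    apply lintegral_congr
    intro ω
    rw [hPsphere ω]
    exact (lintegral_volumeIoiPow2 (fun r => W (r • (ω:E3)))
      (hWmeas.comp (measurable_id.smul_const _))).symm ▸ rfl
  -- value of the radial integral
  have hC3val : ∫⁻ r in Set.Icc Rmin Rmax, ENNReal.ofReal (r^2) = ENNReal.ofReal C3 := by
    have hint : IntegrableOn (fun r : ℝ => r^2) (Set.Ioc Rmin Rmax) volume :=
      ((continuous_pow 2).intervalIntegrable Rmin Rmax).1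
    rw [← Measure.restrict_congr_set Ioc_ae_eq_Icc,
      ← ofReal_integral_eq_lintegral_ofReal hint
        (Filter.Eventually.of_forall fun r => sq_nonneg r)]
    congr 1
    rw [← intervalIntegral.integral_of_le hRR, integral_pow]
    rw [hC3def]
    norm_num
  -- Step 3c : main estimate for IG
  have hG2 : IG ≤ ENNReal.ofReal (K^2) * (ENNReal.ofReal C3 * ID) := by
    have hGpt : ∀ x, G x ^ (2:ℝ) = A.indicator (fun x => ENNReal.ofReal (K^2) * P x) x := by
      intro x
      by_cases hx : x ∈ A
      · rw [hG, indicator_of_mem hx, indicator_of_mem hx,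
          ENNReal.mul_rpow_of_nonneg _ _ (by norm_num : (0:ℝ) ≤ 2)]
        congr 1
        · rw [ENNReal.ofReal_rpow_of_nonneg (Real.sqrt_nonneg _) (by norm_num)]
          congr 1
          rw [show ((2:ℝ)) = ((2:ℕ):ℝ) by norm_num, Real.rpow_natCast]
        · rw [← ENNReal.rpow_mul]
          norm_num
      · rw [hG, indicator_of_notMem hx, indicator_of_notMem hx,
          ENNReal.zero_rpow_of_pos (by norm_num)]
    have hstep : IG = ENNReal.ofReal (K^2) * ∫⁻ x, S.indicator P x ∂μ := by
      calc IG = ∫⁻ x in Ω', G x ^ (2:ℝ) ∂μ := by rw [hIGdef, hrestrict]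
        _ = ∫⁻ x, Ω'.indicator (fun x => G x ^ (2:ℝ)) x ∂μ :=
            (lintegral_indicator hΩ'meas _).symm
        _ = ∫⁻ x, S.indicator (fun x => ENNReal.ofReal (K^2) * P x) x ∂μ := by
            apply lintegral_congr
            intro x
            rw [show (fun x => G x ^ (2:ℝ)) = A.indicator (fun x => ENNReal.ofReal (K^2) * P x)
              from funext hGpt, indicator_indicator, hSdef]
        _ = ∫⁻ x, ENNReal.ofReal (K^2) * S.indicator P x ∂μ := by
            apply lintegral_congr
            intro x
            by_cases hx : x ∈ S
            · rw [indicator_of_mem hx, indicator_of_mem hx]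
            · rw [indicator_of_notMem hx, indicator_of_notMem hx, mul_zero]
        _ = ENNReal.ofReal (K^2) * ∫⁻ x, S.indicator P x ∂μ :=
            lintegral_const_mul _ (hPmeas.indicator hSmeas)
    have hpolar : ∫⁻ x, S.indicator P x ∂μ ≤ ENNReal.ofReal C3 * ∫⁻ x, W x ∂μ := by
      rw [polar_lintegral _ (hPmeas.indicator hSmeas),
        lintegral_prod _ (hcomp (hPmeas.indicator hSmeas)).aemeasurable]
      have hinner : ∀ ω : Metric.sphere (0:E3) 1,
          (∫⁻ r : Set.Ioi (0:ℝ), S.indicator P (r.1 • (ω:E3)) ∂(Measure.volumeIoiPow 2))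
            ≤ ENNReal.ofReal C3 * P (ω:E3) := by
        intro ω
        rw [lintegral_volumeIoiPow2 (fun r => S.indicator P (r • (ω:E3)))
          ((hPmeas.indicator hSmeas).comp (measurable_id.smul_const _))]
        have hnormω : ‖(ω:E3)‖ = 1 := mem_sphere_zero_iff_norm.1 ω.2
        have hptw : ∀ r ∈ Set.Ioi (0:ℝ), ENNReal.ofReal (r^2) * S.indicator P (r • (ω:E3))
            ≤ (Set.Icc Rmin Rmax).indicator (fun r => ENNReal.ofReal (r^2) * P (ω:E3)) r := by
          intro r hr
          rw [mem_Ioi] at hr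
          by_cases hmem : r • (ω:E3) ∈ S
          · have hnorm : ‖r • (ω:E3)‖ = r := by
              rw [norm_smul, hnormω, mul_one, Real.norm_eq_abs, abs_of_pos hr]
            have hrIcc : r ∈ Set.Icc Rmin Rmax := by
              constructor
              · have h5 := hmem.2
                rw [hA, mem_setOf_eq, hnorm] at h5
                exact h5
              · have h6 := hmem.1.2
                rw [Metric.mem_closedBall, dist_zero_right, hnorm] at h6
                exact h6
            rw [indicator_of_mem hmem, indicator_of_mem hrIcc, hPray ω r hr]
          · rw [indicator_of_notMem hmem, mul_zero]
            exact zero_le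
        calc ∫⁻ r in Set.Ioi (0:ℝ), ENNReal.ofReal (r^2) * S.indicator P (r • (ω:E3))
            ≤ ∫⁻ r in Set.Ioi (0:ℝ),
                (Set.Icc Rmin Rmax).indicator (fun r => ENNReal.ofReal (r^2) * P (ω:E3)) r :=
              setLIntegral_mono
                ((((measurable_id.pow_const 2).ennreal_ofReal.mul measurable_const :
                  Measurable fun r : ℝ => ENNReal.ofReal (r^2) * P (ω:E3))).indicator
                  measurableSet_Icc) hptw
          _ = ∫⁻ r in Set.Icc Rmin Rmax ∩ Set.Ioi 0, ENNReal.ofReal (r^2) * P (ω:E3) := by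
              rw [lintegral_indicator measurableSet_Icc, Measure.restrict_restrict measurableSet_Icc]
          _ = ∫⁻ r in Set.Icc Rmin Rmax, ENNReal.ofReal (r^2) * P (ω:E3) := by
              have hIccIoi : Set.Icc Rmin Rmax ∩ Set.Ioi (0:ℝ) = Set.Icc Rmin Rmax :=
                Set.inter_eq_self_of_subset_left fun r hr => lt_of_lt_of_le hRmin hr.1
              rw [hIccIoi]
          _ = (∫⁻ r in Set.Icc Rmin Rmax, ENNReal.ofReal (r^2)) * P (ω:E3) :=
              lintegral_mul_const _ ((measurable_id.pow_const 2).ennreal_ofReal)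
          _ = ENNReal.ofReal C3 * P (ω:E3) := by rw [hC3val]
      calc ∫⁻ ω : Metric.sphere (0:E3) 1,
            ∫⁻ r : Set.Ioi (0:ℝ), S.indicator P (r.1 • (ω:E3)) ∂(Measure.volumeIoiPow 2)
              ∂μ.toSphere
          ≤ ∫⁻ ω : Metric.sphere (0:E3) 1, ENNReal.ofReal C3 * P (ω:E3) ∂μ.toSphere :=
            lintegral_mono hinner
        _ = ENNReal.ofReal C3 * ∫⁻ ω : Metric.sphere (0:E3) 1, P (ω:E3) ∂μ.toSphere :=
            lintegral_const_mul _ (hPmeas.comp measurable_subtype_coe)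
        _ = ENNReal.ofReal C3 * ∫⁻ x, W x ∂μ := by rw [hQint]
    rw [hstep]
    exact mul_le_mul_right (hpolar.trans (mul_le_mul_right hWint _)) _
  -- Step 4 : conversions
  have hIv_eq : ∫ x in Ω, (v x)^2 ∂μ = Iv.toReal := by
    rw [hIvdef, integral_eq_lintegral_of_nonneg_ae
      (Filter.Eventually.of_forall fun x => sq_nonneg _)
      ((hv.continuous.pow 2).aestronglyMeasurable)]
  have hID_eq : ∫ x in Ω, ‖fderiv ℝ v x‖^2 ∂μ = ID.toReal := by
    rw [hIDdef, integral_eq_lintegral_of_nonneg_ae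
      (Filter.Eventually.of_forall fun x => sq_nonneg _)
      ((hDvcont.pow 2).aestronglyMeasurable)]
  have hIc_eq : ∫ (_ : E3) in Ω, c^2 ∂μ = Ic.toReal := by
    rw [hIcdef, integral_eq_lintegral_of_nonneg_ae
      (Filter.Eventually.of_forall fun _ => sq_nonneg _)
      aestronglyMeasurable_const]
  have hIcfin : Ic ≠ ⊤ := by
    rw [hIcdef, lintegral_const, Measure.restrict_apply_univ]
    exact ENNReal.mul_ne_top ENNReal.ofReal_ne_top hμΩ
  have hIDfin : ID ≠ ⊤ := by
    obtain ⟨M, hM⟩ := (isCompact_closedBall (0:E3) Rmax).exists_bound_of_continuousOn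
      ((hDvcont.pow 2).continuousOn)
    have h1 : ID ≤ ∫⁻ x in Metric.closedBall (0:E3) Rmax, ENNReal.ofReal (Dv x^2) ∂μ := by
      rw [hIDdef]
      exact lintegral_mono_set hbdd
    have h2 : ∫⁻ x in Metric.closedBall (0:E3) Rmax, ENNReal.ofReal (Dv x^2) ∂μ
        ≤ ∫⁻ _ in Metric.closedBall (0:E3) Rmax, ENNReal.ofReal M ∂μ := by
      apply setLIntegral_mono measurable_const
      intro x hx
      apply ENNReal.ofReal_le_ofReal
      exact (le_abs_self _).trans (by simpa [Real.norm_eq_abs] using hM x hx)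
    have h3 : ∫⁻ _ in Metric.closedBall (0:E3) Rmax, ENNReal.ofReal M ∂μ ≠ ⊤ := by
      rw [lintegral_const, Measure.restrict_apply_univ]
      exact ENNReal.mul_ne_top ENNReal.ofReal_ne_top measure_closedBall_lt_top.ne
    exact ne_top_of_le_ne_top h3 (h1.trans h2)
  -- assemble
  have hfinal : Iv ^ (1/(2:ℝ)) ≤ Ic ^ (1/(2:ℝ))
      + ENNReal.ofReal (K^2) ^ (1/(2:ℝ))
        * (ENNReal.ofReal C3 ^ (1/(2:ℝ)) * ID ^ (1/(2:ℝ))) := by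
    refine hmink.trans (add_le_add le_rfl ?_)
    calc IG ^ (1/(2:ℝ))
        ≤ (ENNReal.ofReal (K^2) * (ENNReal.ofReal C3 * ID)) ^ (1/(2:ℝ)) :=
          ENNReal.rpow_le_rpow hG2 (by norm_num)
      _ = ENNReal.ofReal (K^2) ^ (1/(2:ℝ))
            * (ENNReal.ofReal C3 ^ (1/(2:ℝ)) * ID ^ (1/(2:ℝ))) := by
          rw [ENNReal.mul_rpow_of_nonneg _ _ (by norm_num : (0:ℝ) ≤ 1/2),
            ENNReal.mul_rpow_of_nonneg _ _ (by norm_num : (0:ℝ) ≤ 1/2)]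
  have hRHSfin : Ic ^ (1/(2:ℝ))
      + ENNReal.ofReal (K^2) ^ (1/(2:ℝ))
        * (ENNReal.ofReal C3 ^ (1/(2:ℝ)) * ID ^ (1/(2:ℝ))) ≠ ⊤ := by
    apply ENNReal.add_ne_top.mpr
    refine ⟨ENNReal.rpow_ne_top_of_nonneg (by norm_num) hIcfin, ?_⟩
    apply ENNReal.mul_ne_top (ENNReal.rpow_ne_top_of_nonneg (by norm_num) ENNReal.ofReal_ne_top)
    exact ENNReal.mul_ne_top (ENNReal.rpow_ne_top_of_nonneg (by norm_num) ENNReal.ofReal_ne_top)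
      (ENNReal.rpow_ne_top_of_nonneg (by norm_num) hIDfin)
  have hreal := ENNReal.toReal_mono hRHSfin hfinal
  rw [ENNReal.toReal_add (ENNReal.rpow_ne_top_of_nonneg (by norm_num) hIcfin)
      (by
        apply ENNReal.mul_ne_top
          (ENNReal.rpow_ne_top_of_nonneg (by norm_num) ENNReal.ofReal_ne_top)
        exact ENNReal.mul_ne_top
          (ENNReal.rpow_ne_top_of_nonneg (by norm_num) ENNReal.ofReal_ne_top)
          (ENNReal.rpow_ne_top_of_nonneg (by norm_num) hIDfin)),
    ENNReal.toReal_mul, ENNReal.toReal_mul] at hreal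
  have e1 : (Iv ^ (1/(2:ℝ))).toReal = Real.sqrt (Iv.toReal) := by
    rw [← ENNReal.toReal_rpow, Real.sqrt_eq_rpow]
  have eIc : (Ic ^ (1/(2:ℝ))).toReal = Real.sqrt (Ic.toReal) := by
    rw [← ENNReal.toReal_rpow, Real.sqrt_eq_rpow]
  have eID : (ID ^ (1/(2:ℝ))).toReal = Real.sqrt (ID.toReal) := by
    rw [← ENNReal.toReal_rpow, Real.sqrt_eq_rpow]
  have e2 : (ENNReal.ofReal (K^2) ^ (1/(2:ℝ))).toReal = K := by
    rw [← ENNReal.toReal_rpow, ENNReal.toReal_ofReal (sq_nonneg K), ← Real.sqrt_eq_rpow,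
      Real.sqrt_sq (Real.sqrt_nonneg _)]
  have e3 : (ENNReal.ofReal C3 ^ (1/(2:ℝ))).toReal = Real.sqrt C3 := by
    rw [← ENNReal.toReal_rpow, ENNReal.toReal_ofReal hC30, ← Real.sqrt_eq_rpow]
  rw [e1, e2, e3, eIc, eID] at hreal
  rw [hIv_eq, hID_eq, hIc_eq]
  have hcsteq : Real.sqrt ((Rmax - Rmin) * (Rmax ^ 3 - Rmin ^ 3) / (3 * Rmax * Rmin))
      = K * Real.sqrt C3 := by
    rw [hK, hC3def, ← Real.sqrt_mul hk0]
    congr 1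
    rw [div_mul_div_comm, div_eq_div_iff (by positivity) (by positivity)]
    ring
  rw [hcsteq]
  linarith [hreal]
end
end

section
/- Let f : [R_a, r] → ℝ be C¹ with 0 < R_min ≤ R_a and r ≤ R_max. Then (f(r) - f(R_a))² ≤ ((R_max - R_min)/(R_max R_min)) · ∫_{R_a}^{r} f'(ξ)² ξ² dξ. -/
open MeasureTheory Set intervalIntegral

theorem radial_poincare_estimate (f : ℝ → ℝ) (Rmin Rmax Ra r : ℝ)
    (h1 : 0 < Rmin) (h2 : Rmin ≤ Ra) (h3 : Ra ≤ r) (h4 : r ≤ Rmax)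
    (hf : ContDiffOn ℝ 1 f (Set.Icc Ra r)) :
    (f r - f Ra) ^ 2
      ≤ (Rmax - Rmin) / (Rmax * Rmin)
          * ∫ ξ in Ra..r, (derivWithin f (Set.Icc Ra r) ξ) ^ 2 * ξ ^ 2 := by
  rcases eq_or_lt_of_le h3 with rfl | hlt
  · simp
  have hRa : 0 < Ra := lt_of_lt_of_le h1 h2
  have hr : 0 < r := lt_trans hRa hlt
  set g : ℝ → ℝ := derivWithin f (Set.Icc Ra r) with hg
  have hUD : UniqueDiffOn ℝ (Set.Icc Ra r) := uniqueDiffOn_Icc hlt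
  have hgc : ContinuousOn g (Set.Icc Ra r) :=
    hf.continuousOn_derivWithin hUD le_rfl
  -- FTC
  have hftc : ∫ ξ in Ra..r, g ξ = f r - f Ra := by
    apply intervalIntegral.integral_eq_sub_of_hasDeriv_right_of_le h3 hf.continuousOn
    · intro x hx
      have hxIcc : x ∈ Set.Icc Ra r := Set.mem_Icc_of_Ioo hx
      have hd := (hf.differentiableOn one_ne_zero x hxIcc).hasDerivWithinAt
      exact hd.mono_of_mem_nhdsWithin (Icc_mem_nhdsGT_of_mem ⟨hxIcc.1, hx.2⟩)
    · exact hgc.intervalIntegrable_of_Icc h3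
  -- measure-theoretic setup
  set μ := volume.restrict (Set.Ioc Ra r) with hμ
  haveI : IsFiniteMeasure μ := by
    constructor
    rw [hμ, Measure.restrict_apply_univ]
    exact measure_Ioc_lt_top
  have hIoc : ∀ a ∈ Set.Ioc Ra r, (0:ℝ) < a := fun a ha => lt_trans hRa ha.1
  have hgm : AEStronglyMeasurable g μ := by
    have h := (hgc.aestronglyMeasurable measurableSet_Icc :
      AEStronglyMeasurable g (volume.restrict (Set.Icc Ra r)))
    exact h.mono_measure (Measure.restrict_mono Set.Ioc_subset_Icc_self le_rfl)
  -- bound for g on Icc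
  obtain ⟨M, hM⟩ := (isCompact_Icc : IsCompact (Set.Icc Ra r)).exists_bound_of_continuousOn hgc
  have hMae : ∀ᵐ a ∂μ, a ∈ Set.Ioc Ra r :=
    ae_restrict_mem measurableSet_Ioc
  -- Memℒp for the two factors
  have hmem1 : MemLp (fun a : ℝ => a⁻¹) (ENNReal.ofReal 2) μ := by
    apply MemLp.of_bound (measurable_inv.aestronglyMeasurable) Ra⁻¹
    filter_upwards [hMae] with a ha
    rw [Real.norm_eq_abs, abs_of_pos (inv_pos.mpr (hIoc a ha))]
    exact inv_anti₀ hRa (le_of_lt ha.1)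
  have hmem2 : MemLp (fun a : ℝ => a * |g a|) (ENNReal.ofReal 2) μ := by
    apply MemLp.of_bound ((aestronglyMeasurable_id.mono_measure
      (Measure.restrict_le_self)).mul hgm.norm) (r * |M|)
    filter_upwards [hMae] with a ha
    simp only [Pi.mul_apply, id_eq, Real.norm_eq_abs]
    rw [abs_mul, abs_abs, abs_of_pos (hIoc a ha)]
    have h1 : a ≤ r := ha.2
    have h2' : |g a| ≤ |M| :=
      le_trans (hM a (Set.Ioc_subset_Icc_self ha)) (le_abs_self M)
    exact mul_le_mul h1 h2' (abs_nonneg _) (le_of_lt hr)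
  -- Hölder / Cauchy–Schwarz
  have hconj : Real.HolderConjugate 2 2 := Real.HolderConjugate.two_two
  have hCS := integral_mul_le_Lp_mul_Lq_of_nonneg hconj
    (f := fun a : ℝ => a⁻¹) (g := fun a : ℝ => a * |g a|)
    (by filter_upwards [hMae] with a ha; exact le_of_lt (inv_pos.mpr (hIoc a ha)))
    (by filter_upwards [hMae] with a ha;
        exact mul_nonneg (le_of_lt (hIoc a ha)) (abs_nonneg _))
    hmem1 hmem2
  -- the product integrand equals |g|
  have hprod : ∫ a, a⁻¹ * (a * |g a|) ∂μ = ∫ a, |g a| ∂μ := by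
    apply MeasureTheory.integral_congr_ae
    filter_upwards [hMae] with a ha
    field_simp [ne_of_gt (hIoc a ha)]
  -- compute ∫ a⁻²
  have hinv2 : ∫ a, a⁻¹ ^ (2:ℝ) ∂μ = Ra⁻¹ - r⁻¹ := by
    have : ∫ a, a⁻¹ ^ (2:ℝ) ∂μ = ∫ ξ in Ra..r, (ξ : ℝ) ^ (-2 : ℤ) := by
      rw [intervalIntegral.integral_of_le h3]
      apply MeasureTheory.integral_congr_ae
      filter_upwards [hMae] with a ha
      rw [Real.rpow_two, zpow_neg, ← inv_zpow]
      norm_cast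
    rw [this, integral_zpow]
    · norm_num
      ring
    · right
      constructor
      · norm_num
      · rw [Set.uIcc_of_le h3]
        intro h
        exact absurd (h.1) (not_le.mpr hRa)
  have hinv2' : ∫ a, a⁻¹ ^ (2:ℝ) ∂μ ≤ (Rmax - Rmin) / (Rmax * Rmin) := by
    rw [hinv2]
    have hRmax : 0 < Rmax := lt_of_lt_of_le h1 (le_trans h2 (le_trans h3 h4))
    have hr' : 0 < r := hr
    have e1 : Ra⁻¹ ≤ Rmin⁻¹ := inv_anti₀ h1 h2
    have e2 : Rmax⁻¹ ≤ r⁻¹ := inv_anti₀ hr' h4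
    have : Ra⁻¹ - r⁻¹ ≤ Rmin⁻¹ - Rmax⁻¹ := by linarith
    apply le_trans this
    have heq : (Rmax - Rmin) / (Rmax * Rmin) = Rmin⁻¹ - Rmax⁻¹ := by
      rw [eq_sub_iff_add_eq, div_add' _ _ _ (ne_of_gt (mul_pos hRmax h1)),
        div_eq_iff (ne_of_gt (mul_pos hRmax h1))]
      field_simp
      ring
    rw [heq]
  -- the second integral equals the RHS integral
  have hB : ∫ a, (a * |g a|) ^ (2:ℝ) ∂μ = ∫ ξ in Ra..r, g ξ ^ 2 * ξ ^ 2 := by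
    rw [intervalIntegral.integral_of_le h3]
    apply MeasureTheory.integral_congr_ae
    filter_upwards [hMae] with a ha
    rw [Real.rpow_two]
    rw [mul_pow, sq_abs]
    ring
  have hBnn : 0 ≤ ∫ a, (a * |g a|) ^ (2:ℝ) ∂μ := by
    apply MeasureTheory.integral_nonneg
    intro a
    simp only [Pi.zero_apply]
    rw [Real.rpow_two]
    positivity
  have hAnn : 0 ≤ ∫ a, a⁻¹ ^ (2:ℝ) ∂μ := by
    rw [hinv2]
    have : r⁻¹ ≤ Ra⁻¹ := inv_anti₀ hRa h3
    linarith
  -- combine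
  have habs : |f r - f Ra| ≤ ∫ a, |g a| ∂μ := by
    rw [← hftc]
    calc |∫ ξ in Ra..r, g ξ| ≤ ∫ ξ in Ra..r, |g ξ| :=
          intervalIntegral.abs_integral_le_integral_abs h3
      _ = ∫ a, |g a| ∂μ := intervalIntegral.integral_of_le h3
  set A := ∫ a, a⁻¹ ^ (2:ℝ) ∂μ with hA
  set B := ∫ a, (a * |g a|) ^ (2:ℝ) ∂μ with hBdef
  have key : |f r - f Ra| ≤ A ^ (1/2 : ℝ) * B ^ (1/2 : ℝ) := by
    apply le_trans habs
    rw [← hprod]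
    exact hCS
  have hsq : (f r - f Ra) ^ 2 ≤ A * B := by
    have h0 : 0 ≤ A ^ (1/2 : ℝ) * B ^ (1/2 : ℝ) :=
      mul_nonneg (Real.rpow_nonneg hAnn _) (Real.rpow_nonneg hBnn _)
    calc (f r - f Ra) ^ 2 = |f r - f Ra| ^ 2 := (sq_abs _).symm
      _ ≤ (A ^ (1/2:ℝ) * B ^ (1/2:ℝ)) ^ 2 := by
          apply pow_le_pow_left₀ (abs_nonneg _) key
      _ = A * B := by
          rw [mul_pow, ← Real.rpow_natCast (A ^ (1/2:ℝ)) 2,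
            ← Real.rpow_natCast (B ^ (1/2:ℝ)) 2,
            ← Real.rpow_mul hAnn, ← Real.rpow_mul hBnn]
          norm_num
  calc (f r - f Ra) ^ 2 ≤ A * B := hsq
    _ ≤ (Rmax - Rmin) / (Rmax * Rmin) * B := by
        apply mul_le_mul_of_nonneg_right hinv2' hBnn
    _ = (Rmax - Rmin) / (Rmax * Rmin) * ∫ ξ in Ra..r, g ξ ^ 2 * ξ ^ 2 := by
        rw [hB]
end
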